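/- If U is uniformly distributed on [0, 2π], B has the Beta(1, r+1) distribution on [0,1] (with r > -1), and U and B are independent, then the complex random variable X = e^{iU}·√B has density η_r(z) = ((r+1)/π)·(1-|z|²)^r on the open unit disk D ⊂ ℂ. -/

import Mathlib

open MeasureTheory ProbabilityTheory Real

open Set
open scoped ENNReal

namespace ExpSqrtBetaAux

lemma map_withDensity_comp {α β : Type*} [MeasurableSpace α] [MeasurableSpace β]
    (μ : Measure α) {f : α → β} (hf : Measurable f) {g : β → ℝ≥0∞} (hg : Measurable g) :
    Measure.map f (μ.withDensity fun x => g (f x)) = (Measure.map f μ).withDensity g := by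
  ext t ht
  rw [Measure.map_apply hf ht, withDensity_apply _ (hf ht), withDensity_apply _ ht,
    setLIntegral_map ht hg hf]

lemma prod_withDensity {α β : Type*} [MeasurableSpace α] [MeasurableSpace β]
    {μ : Measure α} {ν : Measure β} [SigmaFinite μ] [SigmaFinite ν]
    {f : α → ℝ≥0∞} {g : β → ℝ≥0∞} (hf : Measurable f) (hg : Measurable g)
    [SigmaFinite (μ.withDensity f)] [SigmaFinite (ν.withDensity g)] :
    (μ.withDensity f).prod (ν.withDensity g)
      = (μ.prod ν).withDensity fun p => f p.1 * g p.2 := by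
  refine Measure.prod_eq fun s t hs ht => ?_
  rw [withDensity_apply _ (hs.prod ht), ← Measure.prod_restrict,
      lintegral_prod_mul hf.aemeasurable hg.aemeasurable,
      withDensity_apply _ hs, withDensity_apply _ ht]

noncomputable def jac : ℝ × ℝ → (ℝ × ℝ) →L[ℝ] ℝ × ℝ := fun p =>
  LinearMap.toContinuousLinearMap (Matrix.toLin (Module.Basis.finTwoProd ℝ) (Module.Basis.finTwoProd ℝ)
    !![-(Real.sqrt p.2 * Real.sin p.1), Real.cos p.1 / (2 * Real.sqrt p.2);
       Real.sqrt p.2 * Real.cos p.1, Real.sin p.1 / (2 * Real.sqrt p.2)])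

noncomputable def pf : ℝ × ℝ → ℝ × ℝ :=
  fun p => (Real.sqrt p.2 * Real.cos p.1, Real.sqrt p.2 * Real.sin p.1)

lemma pf_cont : Continuous pf :=
  ((Real.continuous_sqrt.comp continuous_snd).mul (Real.continuous_cos.comp continuous_fst)).prodMk
    ((Real.continuous_sqrt.comp continuous_snd).mul (Real.continuous_sin.comp continuous_fst))

lemma hasFDerivAt_pf {p : ℝ × ℝ} (hp : 0 < p.2) : HasFDerivAt pf (jac p) p := by
  obtain ⟨u, b⟩ := p
  simp only at hp
  rw [jac, Matrix.toLin_finTwoProd_toContinuousLinearMap]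
  have hsq : HasFDerivAt (fun q : ℝ × ℝ => Real.sqrt q.2)
      ((1 / (2 * Real.sqrt b)) • ContinuousLinearMap.snd ℝ ℝ ℝ) (u, b) :=
    (Real.hasDerivAt_sqrt hp.ne').comp_hasFDerivAt (u, b) hasFDerivAt_snd
  have hcos : HasFDerivAt (fun q : ℝ × ℝ => Real.cos q.1)
      ((-Real.sin u) • ContinuousLinearMap.fst ℝ ℝ ℝ) (u, b) :=
    (Real.hasDerivAt_cos u).comp_hasFDerivAt (f := Prod.fst) (u, b) hasFDerivAt_fst
  have hsin : HasFDerivAt (fun q : ℝ × ℝ => Real.sin q.1)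
      ((Real.cos u) • ContinuousLinearMap.fst ℝ ℝ ℝ) (u, b) :=
    (Real.hasDerivAt_sin u).comp_hasFDerivAt (f := Prod.fst) (u, b) hasFDerivAt_fst
  refine ((hsq.mul hcos).prodMk (hsq.mul hsin)).congr_fderiv ?_
  ext <;> simp [smul_smul] <;> field_simp

lemma jac_det {p : ℝ × ℝ} (hp : 0 < p.2) : (jac p).det = -(1 / 2) := by
  obtain ⟨u, b⟩ := p
  simp only at hp
  have hsb : Real.sqrt b ≠ 0 := (Real.sqrt_pos.mpr hp).ne'
  rw [jac]
  simp only [LinearMap.det_toContinuousLinearMap, LinearMap.det_toLin, Matrix.det_fin_two_of]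
  have h1 : Real.sin u ^ 2 + Real.cos u ^ 2 = 1 := Real.sin_sq_add_cos_sq u
  field_simp
  nlinarith [h1]

end ExpSqrtBetaAux

open ExpSqrtBetaAux

theorem exp_sqrt_beta_density
    {Ω : Type*} [MeasurableSpace Ω] (P : Measure Ω) [IsProbabilityMeasure P]
    (r : ℝ) (hr : -1 < r)
    (U B : Ω → ℝ) (hU : Measurable U) (hB : Measurable B)
    (hUlaw : Measure.map U P
      = (ENNReal.ofReal (2 * π))⁻¹ • volume.restrict (Set.Icc 0 (2 * π)))
    (hBlaw : Measure.map B P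
      = volume.withDensity fun x =>
          ENNReal.ofReal
            (if x ∈ Set.Icc (0 : ℝ) 1 then
              (Real.Gamma (1 + (r + 1)) / (Real.Gamma 1 * Real.Gamma (r + 1))) *
                x ^ ((1 : ℝ) - 1) * (1 - x) ^ ((r + 1) - 1)
            else 0))
    (hInd : IndepFun U B P) :
    Measure.map (fun ω => Complex.exp (U ω * Complex.I) * (Real.sqrt (B ω) : ℂ)) P
      = (volume : Measure ℂ).withDensity fun z =>
          ENNReal.ofReal
            (if ‖z‖ < 1 then (r + 1) / π * (1 - ‖z‖ ^ 2) ^ (r : ℝ) else 0) := by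
  classical
  have hπ : (0 : ℝ) < π := Real.pi_pos
  have hr1 : (0 : ℝ) < r + 1 := by linarith
  set e : ℝ × ℝ → ℂ := fun p => Complex.measurableEquivRealProd.symm p with he_def
  have he : Measurable e := Complex.measurableEquivRealProd.symm.measurable
  set G : ℂ → ℝ≥0∞ := fun z =>
    ENNReal.ofReal (if ‖z‖ < 1 then (r + 1) / π * (1 - ‖z‖ ^ 2) ^ (r : ℝ) else 0) with hG_def
  have hGmeas : Measurable G := by
    apply Measurable.ennreal_ofReal
    refine Measurable.ite (measurableSet_lt measurable_norm measurable_const) ?_ measurable_const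
    exact measurable_const.mul
      ((measurable_const.sub (measurable_norm.pow_const 2)).pow measurable_const)
  set s : Set (ℝ × ℝ) := Set.Ioo 0 (2 * π) ×ˢ Set.Ioo 0 1 with hs_def
  have hs_meas : MeasurableSet s := measurableSet_Ioo.prod measurableSet_Ioo
  have hfm : Measurable pf := pf_cont.measurable
  -- norms
  have hnorme : ∀ x : ℝ × ℝ, ‖e x‖ = Real.sqrt (x.1 ^ 2 + x.2 ^ 2) := by
    intro x
    rw [he_def]
    simp only [Complex.measurableEquivRealProd_symm_apply, Complex.norm_def,
      Complex.normSq_mk]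
    congr 1
    ring
  have hnorm_pf : ∀ p ∈ s, ‖e (pf p)‖ = Real.sqrt p.2 := by
    rintro ⟨u, b⟩ ⟨hu, hb⟩
    rw [hnorme]
    congr 1
    have h1 := Real.sin_sq_add_cos_sq u
    have h2 : Real.sqrt b ^ 2 = b := Real.sq_sqrt (le_of_lt hb.1)
    simp only [pf]
    nlinarith [h1, h2]
  -- densities
  set fU : ℝ → ℝ≥0∞ := (Set.Icc (0 : ℝ) (2 * π)).indicator
      (fun _ => (ENNReal.ofReal (2 * π))⁻¹) with hfU_def
  have hfUmeas : Measurable fU := measurable_const.indicator measurableSet_Icc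
  set fB : ℝ → ℝ≥0∞ := fun x =>
    ENNReal.ofReal
      (if x ∈ Set.Icc (0 : ℝ) 1 then
        (Real.Gamma (1 + (r + 1)) / (Real.Gamma 1 * Real.Gamma (r + 1))) *
          x ^ ((1 : ℝ) - 1) * (1 - x) ^ ((r + 1) - 1)
      else 0) with hfB_def
  have hfBmeas : Measurable fB := by
    apply Measurable.ennreal_ofReal
    refine Measurable.ite measurableSet_Icc ?_ measurable_const
    exact ((measurable_const.mul (measurable_id.pow measurable_const)).mul
      ((measurable_const.sub measurable_id).pow measurable_const))
  have hUlaw' : Measure.map U P = volume.withDensity fU := by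
    rw [hUlaw, hfU_def, withDensity_indicator measurableSet_Icc, withDensity_const]
  haveI : SigmaFinite (volume.withDensity fU) := by
    have : IsProbabilityMeasure (Measure.map U P) := Measure.isProbabilityMeasure_map hU.aemeasurable
    rw [hUlaw'] at this
    infer_instance
  haveI : SigmaFinite (volume.withDensity fB) := by
    have : IsProbabilityMeasure (Measure.map B P) := Measure.isProbabilityMeasure_map hB.aemeasurable
    rw [hBlaw] at this
    infer_instance
  -- key pointwise identity on s
  have hkey : ∀ p ∈ s, fU p.1 * fB p.2 = ENNReal.ofReal (1 / 2) * G (e (pf p)) := by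
    rintro ⟨u, b⟩ ⟨hu, hb⟩
    have hfUv : fU u = (ENNReal.ofReal (2 * π))⁻¹ :=
      indicator_of_mem (Ioo_subset_Icc_self hu) _
    have hb01 : b ∈ Set.Icc (0 : ℝ) 1 := Ioo_subset_Icc_self hb
    have hΓpos : 0 < Real.Gamma (r + 1) := Real.Gamma_pos_of_pos hr1
    have hΓ : Real.Gamma (1 + (r + 1)) / (Real.Gamma 1 * Real.Gamma (r + 1)) = r + 1 := by
      rw [add_comm 1 (r + 1), Real.Gamma_add_one hr1.ne', Real.Gamma_one]
      field_simp
    have hfBv : fB b = ENNReal.ofReal ((r + 1) * (1 - b) ^ r) := by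
      rw [hfB_def]
      simp only [if_pos hb01, hΓ]
      norm_num
    have hnormv : ‖e (pf (u, b))‖ = Real.sqrt b := hnorm_pf _ ⟨hu, hb⟩
    have hlt : ‖e (pf (u, b))‖ < 1 := by
      rw [hnormv, Real.sqrt_lt' one_pos, one_pow]
      exact hb.2
    have hsqv : ‖e (pf (u, b))‖ ^ 2 = b := by
      rw [hnormv, Real.sq_sqrt (le_of_lt hb.1)]
    have hGv : G (e (pf (u, b))) = ENNReal.ofReal ((r + 1) / π * (1 - b) ^ r) := by
      rw [hG_def]
      simp only [if_pos hlt, hsqv]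
    rw [hfUv, hfBv, hGv, ← ENNReal.ofReal_inv_of_pos (by positivity : (0 : ℝ) < 2 * π),
      ← ENNReal.ofReal_mul (by positivity), ← ENNReal.ofReal_mul (by norm_num)]
    congr 1
    have h1b : (0 : ℝ) ≤ (1 - b) ^ r := Real.rpow_nonneg (by linarith [hb.2]) r
    field_simp
  -- a.e. indicator
  have hnull1 : (volume : Measure (ℝ × ℝ)) (({0, 2 * π} : Set ℝ) ×ˢ (univ : Set ℝ)) = 0 := by
    rw [Measure.volume_eq_prod, Measure.prod_prod]
    have : (volume : Measure ℝ) ({0, 2 * π} : Set ℝ) = 0 :=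
      ((Set.finite_singleton _).insert _).measure_zero volume
    rw [this, zero_mul]
  have hnull2 : (volume : Measure (ℝ × ℝ)) ((univ : Set ℝ) ×ˢ ({0, 1} : Set ℝ)) = 0 := by
    rw [Measure.volume_eq_prod, Measure.prod_prod]
    have : (volume : Measure ℝ) ({0, 1} : Set ℝ) = 0 :=
      ((Set.finite_singleton _).insert _).measure_zero volume
    rw [this, mul_zero]
  have hae1 : (fun p : ℝ × ℝ => fU p.1 * fB p.2)
      =ᵐ[volume] s.indicator (fun p => fU p.1 * fB p.2) := by
    refine ae_iff.mpr (measure_mono_null ?_ (measure_union_null hnull1 hnull2))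
    intro p hp
    simp only [mem_setOf_eq] at hp
    by_contra hpu
    simp only [mem_union, mem_prod, mem_insert_iff, mem_singleton_iff, mem_univ, and_true,
      true_and, not_or] at hpu
    obtain ⟨⟨h10, h12π⟩, h20, h21⟩ := hpu
    apply hp
    by_cases hps : p ∈ s
    · rw [indicator_of_mem hps]
    · rw [indicator_of_notMem hps]
      by_cases h1 : p.1 ∈ Set.Icc (0 : ℝ) (2 * π)
      · by_cases h2 : p.2 ∈ Set.Icc (0 : ℝ) 1
        · exfalso
          apply hps
          rw [hs_def]
          constructor
          · exact ⟨lt_of_le_of_ne h1.1 (Ne.symm h10), lt_of_le_of_ne h1.2 h12π⟩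
          · exact ⟨lt_of_le_of_ne h2.1 (Ne.symm h20), lt_of_le_of_ne h2.2 h21⟩
        · have hz : fB p.2 = 0 := by
            rw [hfB_def]
            simp only [if_neg h2, ENNReal.ofReal_zero]
          rw [hz, mul_zero]
      · have hz : fU p.1 = 0 := indicator_of_notMem h1 _
        rw [hz, zero_mul]
  -- injectivity
  have hinj : Set.InjOn pf s := by
    rintro ⟨u, b⟩ ⟨hu, hb⟩ ⟨u', b'⟩ ⟨hu', hb'⟩ hfe
    simp only [pf, Prod.mk.injEq] at hfe
    obtain ⟨h1, h2⟩ := hfe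
    simp only at hu hb hu' hb'
    have hsq : Real.sqrt b ^ 2 = b := Real.sq_sqrt (le_of_lt hb.1)
    have hsq' : Real.sqrt b' ^ 2 = b' := Real.sq_sqrt (le_of_lt hb'.1)
    have hbb : b = b' := by
      have l1 : (Real.sqrt b * Real.cos u) ^ 2 + (Real.sqrt b * Real.sin u) ^ 2 = b := by
        linear_combination (Real.sqrt b) ^ 2 * (Real.sin_sq_add_cos_sq u) + hsq
      have l2 : (Real.sqrt b' * Real.cos u') ^ 2 + (Real.sqrt b' * Real.sin u') ^ 2 = b' := by
        linear_combination (Real.sqrt b') ^ 2 * (Real.sin_sq_add_cos_sq u') + hsq'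
      rw [h1, h2] at l1
      exact l1.symm.trans l2
    subst hbb
    have hsb : Real.sqrt b ≠ 0 := (Real.sqrt_pos.mpr hb.1).ne'
    have hcos : Real.cos u = Real.cos u' := mul_left_cancel₀ hsb h1
    have hsin : Real.sin u = Real.sin u' := mul_left_cancel₀ hsb h2
    have hexp : Complex.exp (u * Complex.I) = Complex.exp (u' * Complex.I) := by
      rw [Complex.exp_mul_I, Complex.exp_mul_I, ← Complex.ofReal_cos, ← Complex.ofReal_cos,
        ← Complex.ofReal_sin, ← Complex.ofReal_sin, hcos, hsin]
    obtain ⟨n, hn⟩ := Complex.exp_eq_exp_iff_exists_int.mp hexp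
    have him : u = u' + n * (2 * π) := by
      have := congrArg Complex.im hn
      simpa using this
    have hn0 : n = 0 := by
      have h2π : (0 : ℝ) < 2 * π := by positivity
      by_contra hne
      have h1n : (1 : ℝ) ≤ |(n : ℝ)| := by
        rw [← Int.cast_abs]
        exact_mod_cast Int.one_le_abs hne
      have : |u - u'| < 2 * π := by
        rw [abs_sub_lt_iff]
        constructor <;> [linarith [hu.1, hu.2, hu'.1, hu'.2]; linarith [hu.1, hu.2, hu'.1, hu'.2]]
      have habs : |u - u'| = |(n : ℝ)| * (2 * π) := by
        rw [him]
        rw [show u' + n * (2 * π) - u' = n * (2 * π) by ring, abs_mul, abs_of_pos h2π]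
      nlinarith [h1n, this, habs]
    simp only [hn0, Int.cast_zero, zero_mul, add_zero] at him
    simp [Prod.ext_iff, him]
  -- image
  have himage : ∀ x : ℝ × ℝ, x.1 ^ 2 + x.2 ^ 2 < 1 → x.2 ≠ 0 → x ∈ pf '' s := by
    intro x hlt hx2
    set z : ℂ := ⟨x.1, x.2⟩ with hz_def
    have hz : z ≠ 0 := by
      intro h
      apply hx2
      have := congrArg Complex.im h
      simpa [hz_def] using this
    have h22 : 0 < x.2 ^ 2 := by
      rw [← sq_abs]
      exact pow_pos (abs_pos.mpr hx2) 2
    have hb : x.1 ^ 2 + x.2 ^ 2 ∈ Set.Ioo (0 : ℝ) 1 := ⟨by nlinarith [sq_nonneg x.1], hlt⟩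
    have hsb : Real.sqrt (x.1 ^ 2 + x.2 ^ 2) = ‖z‖ := by
      rw [Complex.norm_def, hz_def, Complex.normSq_mk]
      congr 1
      ring
    have ha : Complex.arg z ≠ 0 := by
      intro h0
      exact hx2 ((Complex.arg_eq_zero_iff.mp h0).2)
    have haIoc := Complex.arg_mem_Ioc z
    set a := Complex.arg z with ha_def
    set u := if 0 < a then a else a + 2 * π with hu_def
    have hu : u ∈ Set.Ioo (0 : ℝ) (2 * π) := by
      rw [hu_def]
      split_ifs with hpos
      · exact ⟨hpos, lt_of_le_of_lt haIoc.2 (by linarith)⟩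
      · have hneg : a < 0 := lt_of_le_of_ne (not_lt.mp hpos) ha
        exact ⟨by linarith [haIoc.1], by linarith⟩
    have hcosu : Real.cos u = Real.cos a := by
      rw [hu_def]
      split_ifs
      · rfl
      · exact Real.cos_add_two_pi a
    have hsinu : Real.sin u = Real.sin a := by
      rw [hu_def]
      split_ifs
      · rfl
      · exact Real.sin_add_two_pi a
    refine ⟨(u, x.1 ^ 2 + x.2 ^ 2), ⟨hu, hb⟩, ?_⟩
    simp only [pf]
    rw [hsb, hcosu, hsinu]
    have hre : ‖z‖ * Real.cos a = x.1 := by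
      rw [ha_def, Complex.norm_mul_cos_arg, hz_def]
    have him : ‖z‖ * Real.sin a = x.2 := by
      rw [ha_def, Complex.norm_mul_sin_arg, hz_def]
    rw [hre, him]
  -- the chained density measure
  have hGe : Measurable fun x : ℝ × ℝ => G (e x) := hGmeas.comp he
  have hGepf : Measurable fun p : ℝ × ℝ => G (e (pf p)) := (hGmeas.comp he).comp hfm
  have hm : (volume.restrict s).withDensity (fun _ => ENNReal.ofReal (1 / 2))
      = (volume.restrict s).withDensity (fun p => ENNReal.ofReal |(jac p).det|) := by
    refine withDensity_congr_ae ((ae_restrict_iff' hs_meas).mpr (ae_of_all _ fun p hp => ?_))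
    show ENNReal.ofReal (1 / 2) = ENNReal.ofReal |(jac p).det|
    rw [jac_det hp.2.1, abs_neg, abs_of_pos (by norm_num : (0:ℝ) < 1/2)]
  have hchain : ((volume : Measure (ℝ × ℝ))).withDensity (fun p => fU p.1 * fB p.2)
      = ((volume.restrict s).withDensity
          (fun p => ENNReal.ofReal |(jac p).det|)).withDensity (fun p => G (e (pf p))) := by
    rw [withDensity_congr_ae hae1, withDensity_indicator hs_meas, ← hm,
      ← withDensity_mul _ measurable_const hGepf]
    refine withDensity_congr_ae ((ae_restrict_iff' hs_meas).mpr (ae_of_all _ fun p hp => ?_))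
    simpa using hkey p hp
  have hderiv : ∀ p ∈ s, HasFDerivWithinAt pf (jac p) s p := fun p hp =>
    (hasFDerivAt_pf hp.2.1).hasFDerivWithinAt
  have hJac : Measure.map pf ((volume.restrict s).withDensity
      (fun p => ENNReal.ofReal |(jac p).det|)) = volume.restrict (pf '' s) :=
    map_withDensity_abs_det_fderiv_eq_addHaar volume hs_meas.nullMeasurableSet hderiv hinj
  have himg_meas : MeasurableSet (pf '' s) :=
    hs_meas.image_of_continuousOn_injOn pf_cont.continuousOn hinj
  have hae_mem : ∀ᵐ x ∂((volume : Measure (ℝ × ℝ)).withDensity (fun x => G (e x))),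
      x ∈ pf '' s := by
    rw [ae_withDensity_iff hGe]
    have hnullax : (volume : Measure (ℝ × ℝ)) {x : ℝ × ℝ | x.2 = 0} = 0 := by
      have hset : {x : ℝ × ℝ | x.2 = 0} = (univ : Set ℝ) ×ˢ ({0} : Set ℝ) := by
        ext x
        simp only [mem_setOf_eq, Set.mem_prod, mem_univ, true_and, mem_singleton_iff]
      rw [hset, Measure.volume_eq_prod, Measure.prod_prod]
      simp
    have h2 : ∀ᵐ x : ℝ × ℝ, x.2 ≠ 0 := by
      rw [ae_iff]
      simpa using hnullax
    filter_upwards [h2] with x hx hGx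
    apply himage x ?_ hx
    by_contra hge
    push_neg at hge
    apply hGx
    have hnl : ¬ ‖e x‖ < 1 := by
      rw [hnorme]
      intro hcon
      have := Real.sq_sqrt (by positivity : (0 : ℝ) ≤ x.1 ^ 2 + x.2 ^ 2)
      nlinarith [Real.sqrt_nonneg (x.1 ^ 2 + x.2 ^ 2)]
    rw [hG_def]
    simp only [if_neg hnl, ENNReal.ofReal_zero]
  have hrestrict : (volume.restrict (pf '' s)).withDensity (fun y => G (e y))
      = (volume : Measure (ℝ × ℝ)).withDensity (fun y => G (e y)) := by
    rw [← restrict_withDensity himg_meas]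
    exact Measure.restrict_eq_self_of_ae_mem hae_mem
  have hmape : Measure.map e ((volume : Measure (ℝ × ℝ)).withDensity (fun y => G (e y)))
      = (volume : Measure ℂ).withDensity G := by
    rw [map_withDensity_comp _ he hGmeas,
      (Complex.volume_preserving_equiv_real_prod.symm Complex.measurableEquivRealProd).map_eq]
  have hpair := (indepFun_iff_map_prod_eq_prod_map_map hU.aemeasurable hB.aemeasurable).mp hInd
  have hmapX : Measure.map (fun ω => Complex.exp (U ω * Complex.I) * (Real.sqrt (B ω) : ℂ)) P
      = Measure.map e (Measure.map pf (Measure.map (fun ω => (U ω, B ω)) P)) := by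
    rw [Measure.map_map hfm (hU.prodMk hB), Measure.map_map he (hfm.comp (hU.prodMk hB))]
    congr 1
    funext ω
    show Complex.exp (U ω * Complex.I) * (Real.sqrt (B ω) : ℂ) = e (pf (U ω, B ω))
    rw [he_def]
    simp only [pf, Complex.measurableEquivRealProd_symm_apply]
    apply Complex.ext <;>
      simp only [Complex.mul_re, Complex.mul_im, Complex.ofReal_re, Complex.ofReal_im,
        Complex.exp_ofReal_mul_I_re, Complex.exp_ofReal_mul_I_im, mul_zero, zero_mul,
        sub_zero, add_zero, zero_add] <;> ring
  rw [hmapX, hpair, hUlaw', hBlaw, ExpSqrtBetaAux.prod_withDensity hfUmeas hfBmeas, ← Measure.volume_eq_prod,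
    hchain]
  rw [show (fun p => G (e (pf p))) = fun p => (fun y => G (e y)) (pf p) from rfl,
    map_withDensity_comp _ hfm hGe, hJac, hrestrict, hmape]
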